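/- Let m be a natural number with m < p^k and let f : R → ℤ/pℤ. The following are equivalent: (i) f ∈ Ω_{m−1}; (ii) D^m f = 0, where D^m denotes the m-fold iterate of D; (iii) for every choice of c_1, …, c_m ∈ R, the iterated difference Δ_{c_m}∘⋯∘Δ_{c_1} f is identically 0. -/

import Mathlib

/-- The binomial phi function `φ_m : ℤ/p^kℤ → ℤ/pℤ`, `φ_m(x) = C(x̄, m) mod p`. -/
def phi (p k m : ℕ) (x : ZMod (p ^ k)) : ZMod p := (x.val.choose m : ZMod p)

/-- mod-p periodicity of binomial coefficients with period `p^k` in the top argument. -/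
lemma choose_add_pow (p k : ℕ) [hp : Fact p.Prime] (i : ℕ) (hi : i < p ^ k) (a : ℕ) :
    (((a + p ^ k).choose i : ℕ) : ZMod p) = (a.choose i : ZMod p) := by
  rw [Nat.add_choose_eq]
  push_cast
  rw [Finset.sum_eq_single (i, 0)]
  · simp
  · rintro ⟨b, c⟩ hmem hne
    simp only [Finset.HasAntidiagonal.mem_antidiagonal] at hmem
    have hc : c ≠ 0 := by
      rintro rfl; exact hne (by simp [show b = i by omega])
    have hdvd : (p : ℕ) ∣ (p ^ k).choose c :=
      Nat.Prime.dvd_choose_pow hp.out hc (by omega)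
    have : ((p ^ k).choose c : ZMod p) = 0 :=
      (ZMod.natCast_eq_zero_iff _ _).mpr hdvd
    simp [this]
  · intro h
    exact absurd (by simp) h

/-- Vandermonde identity in `ZMod p` for values of `ZMod (p^k)` elements. -/
lemma val_add_choose (p k : ℕ) [hp : Fact p.Prime] (i : ℕ) (hi : i < p ^ k)
    (x s : ZMod (p ^ k)) :
    (((x + s).val.choose i : ℕ) : ZMod p) =
      ∑ j ∈ Finset.range (i + 1), (x.val.choose j : ZMod p) * (s.val.choose (i - j) : ZMod p) := by
  haveI : NeZero (p ^ k) := ⟨pow_ne_zero _ hp.out.ne_zero⟩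
  have hx := ZMod.val_lt x
  have hs := ZMod.val_lt s
  have hadd : (x + s).val = (x.val + s.val) % (p ^ k) := ZMod.val_add x s
  have key : ((x.val + s.val).choose i : ZMod p) =
      ∑ j ∈ Finset.range (i + 1), (x.val.choose j : ZMod p) * (s.val.choose (i - j) : ZMod p) := by
    rw [Nat.add_choose_eq, Finset.Nat.sum_antidiagonal_eq_sum_range_succ
      (f := fun a b => x.val.choose a * s.val.choose b)]
    push_cast
    rfl
  rcases lt_or_ge (x.val + s.val) (p ^ k) with h | h
  · rw [hadd, Nat.mod_eq_of_lt h, key]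
  · have h2 : (x + s).val + p ^ k = x.val + s.val := by
      have hm : (x.val + s.val) % p ^ k = x.val + s.val - p ^ k := by
        rw [Nat.mod_eq_sub_mod h, Nat.mod_eq_of_lt (by omega)]
      rw [hadd, hm]; omega
    calc ((x + s).val.choose i : ZMod p)
        = (((x + s).val + p ^ k).choose i : ZMod p) := (choose_add_pow p k i hi _).symm
      _ = _ := by rw [h2, key]

/-- The difference operator with step `s`, as a linear map. -/
def Dc (p k : ℕ) [Fact p.Prime] (s : ZMod (p ^ k)) :
    (ZMod (p ^ k) → ZMod p) →ₗ[ZMod p] (ZMod (p ^ k) → ZMod p) where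
  toFun g := fun x => g (x + s) - g x
  map_add' g h := by funext x; simp; ring
  map_smul' c g := by funext x; simp [smul_sub]; ring

lemma Dc_phi (p k : ℕ) [hp : Fact p.Prime] (i : ℕ) (hi : i < p ^ k) (s : ZMod (p ^ k)) :
    Dc p k s (phi p k i) =
      ∑ j ∈ Finset.range i, (s.val.choose (i - j) : ZMod p) • phi p k j := by
  funext x
  simp only [Dc, LinearMap.coe_mk, AddHom.coe_mk, phi]
  rw [val_add_choose p k i hi x s, Finset.sum_range_succ]
  simp only [Nat.sub_self, Nat.choose_zero_right, Nat.cast_one, mul_one, add_sub_cancel_right]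
  rw [Finset.sum_apply]
  exact Finset.sum_congr rfl fun j hj => by simp [phi, mul_comm]

/-- The set of generators `{φ_i : i < m}`. -/
abbrev S (p k m : ℕ) : Set (ZMod (p ^ k) → ZMod p) := {g | ∃ i < m, g = phi p k i}

lemma span_shrink (p k : ℕ) [Fact p.Prime] (m : ℕ) (hm : m ≤ p ^ k) (s : ZMod (p ^ k))
    {g : ZMod (p ^ k) → ZMod p} (hg : g ∈ Submodule.span (ZMod p) (S p k m)) :
    Dc p k s g ∈ Submodule.span (ZMod p) (S p k (m - 1)) := by
  have hle : Submodule.span (ZMod p) (S p k m) ≤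
      (Submodule.span (ZMod p) (S p k (m - 1))).comap (Dc p k s) := by
    rw [Submodule.span_le]
    rintro _ ⟨i, him, rfl⟩
    simp only [Submodule.mem_comap, SetLike.mem_coe]
    rw [Dc_phi p k i (lt_of_lt_of_le him hm) s]
    refine Submodule.sum_mem _ fun j hj => Submodule.smul_mem _ _ ?_
    exact Submodule.subset_span ⟨j, by
      simp only [Finset.mem_range] at hj; omega, rfl⟩
  exact hle hg

lemma foldr_zero (p k : ℕ) [Fact p.Prime] (c : List (ZMod (p ^ k))) :
    ∀ n : ℕ, n ≤ p ^ k → ∀ f : ZMod (p ^ k) → ZMod p,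
      f ∈ Submodule.span (ZMod p) (S p k n) →
      c.foldr (fun s g => fun x => g (x + s) - g x) f ∈
        Submodule.span (ZMod p) (S p k (n - c.length)) := by
  induction c with
  | nil => intro n _ f hf; simpa using hf
  | cons s t ih =>
    intro n hn f hf
    have h1 := ih n hn f hf
    have h2 := span_shrink p k (n - t.length) (by omega) s h1
    have : n - (s :: t).length = n - t.length - 1 := by simp; omega
    rw [this]
    exact h2

lemma mem_span_constant (p k : ℕ) [hp : Fact p.Prime]
    (h : ZMod (p ^ k) → ZMod p) (hstep : ∀ x, h (x + 1) = h x) : ∀ x, h x = h 0 := by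
  haveI : NeZero (p ^ k) := ⟨pow_ne_zero _ hp.out.ne_zero⟩
  have hn : ∀ n : ℕ, h (n : ZMod (p ^ k)) = h 0 := by
    intro n
    induction n with
    | zero => simp
    | succ n ih => rw [Nat.cast_succ, hstep, ih]
  intro x
  have := hn x.val
  rwa [ZMod.natCast_rightInverse x] at this

lemma one_lt_pk (p k : ℕ) [hp : Fact p.Prime] (hk : 1 ≤ k) : 1 < p ^ k :=
  Nat.one_lt_pow (by omega) hp.out.one_lt

lemma Dc_one_phi (p k : ℕ) [hp : Fact p.Prime] (hk : 1 ≤ k) (i : ℕ) (hi : i + 1 < p ^ k) :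
    Dc p k 1 (phi p k (i + 1)) = phi p k i := by
  rw [Dc_phi p k (i + 1) hi 1]
  rw [Finset.sum_eq_single i]
  · rw [ZMod.val_one_eq_one_mod]
    rw [Nat.mod_eq_of_lt (one_lt_pk p k hk)]
    simp
  · intro j hj hne
    simp only [Finset.mem_range] at hj
    rw [ZMod.val_one_eq_one_mod, Nat.mod_eq_of_lt (one_lt_pk p k hk),
      Nat.choose_eq_zero_of_lt (by omega)]
    simp
  · intro habs
    exact absurd (Finset.self_mem_range_succ i) habs

lemma D_mem_span (p k : ℕ) [hp : Fact p.Prime] (hk : 1 ≤ k) :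
    ∀ m : ℕ, m ≤ p ^ k → ∀ f : ZMod (p ^ k) → ZMod p,
      (fun g : ZMod (p ^ k) → ZMod p => fun x => g (x + 1) - g x)^[m] f = 0 →
      f ∈ Submodule.span (ZMod p) (S p k m) := by
  intro m
  induction m with
  | zero => intro _ f hf; simp only [Function.iterate_zero, id] at hf; simp [hf]
  | succ m ih =>
    intro hm f hf
    rw [Function.iterate_succ_apply] at hf
    have hDf : (fun x => f (x + 1) - f x) ∈ Submodule.span (ZMod p) (S p k m) :=
      ih (by omega) _ hf
    have hmap : Submodule.span (ZMod p) (S p k m) ≤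
        Submodule.map (Dc p k 1) (Submodule.span (ZMod p) (S p k (m + 1))) := by
      rw [Submodule.span_le]
      rintro _ ⟨i, him, rfl⟩
      exact ⟨phi p k (i + 1), Submodule.subset_span ⟨i + 1, by omega, rfl⟩,
        Dc_one_phi p k hk i (by omega)⟩
    obtain ⟨g, hg, hgeq⟩ := hmap hDf
    have hstep : ∀ x, (f - g) (x + 1) = (f - g) x := by
      intro x
      have := congrFun hgeq x
      simp only [Dc, LinearMap.coe_mk, AddHom.coe_mk] at this
      simp only [Pi.sub_apply]
      have h0 : g (x + 1) - g x = f (x + 1) - f x := this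
      linear_combination -h0
    have hconst := mem_span_constant p k (f - g) hstep
    have hphi0 : phi p k 0 = fun _ => (1 : ZMod p) := by
      funext x; simp [phi]
    have hfeq : f = g + (f 0 - g 0) • phi p k 0 := by
      funext x
      have := hconst x
      simp only [Pi.sub_apply] at this
      simp [hphi0]
      linear_combination this
    rw [hfeq]
    exact Submodule.add_mem _ hg (Submodule.smul_mem _ _
      (Submodule.subset_span ⟨0, by omega, rfl⟩))

lemma foldr_replicate (p k m : ℕ) (f : ZMod (p ^ k) → ZMod p) :
    (List.replicate m (1 : ZMod (p ^ k))).foldr (fun s g => fun x => g (x + s) - g x) f =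
      (fun g : ZMod (p ^ k) → ZMod p => fun x => g (x + 1) - g x)^[m] f := by
  induction m with
  | zero => rfl
  | succ m ih =>
    rw [List.replicate_succ, List.foldr_cons, ih, Function.iterate_succ_apply']

/-- For `m < p^k` and `f : R → ℤ/pℤ`, the following are equivalent:
(i) `f ∈ Ω_{m−1} = span{φ_i : i < m}`; (ii) `D^m f = 0` where `Df(x) = f(x+1) − f(x)`;
(iii) for every choice of steps `c_1, …, c_m ∈ R`, `Δ_{c_m}∘⋯∘Δ_{c_1} f ≡ 0`. -/
theorem stmt_10 (p k m : ℕ) [Fact p.Prime] (hk : 1 ≤ k) (hm : m < p ^ k)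
    (f : ZMod (p ^ k) → ZMod p) :
    (f ∈ Submodule.span (ZMod p) {g : ZMod (p ^ k) → ZMod p | ∃ i < m, g = phi p k i} ↔
      (fun g : ZMod (p ^ k) → ZMod p => fun x => g (x + 1) - g x)^[m] f = 0) ∧
    (f ∈ Submodule.span (ZMod p) {g : ZMod (p ^ k) → ZMod p | ∃ i < m, g = phi p k i} ↔
      ∀ c : List (ZMod (p ^ k)), c.length = m →
        c.foldr (fun s g => fun x => g (x + s) - g x) f = 0) := by
  have hS0 : S p k 0 = ∅ := by ext g; simp
  have h13 : f ∈ Submodule.span (ZMod p) (S p k m) →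
      ∀ c : List (ZMod (p ^ k)), c.length = m →
        c.foldr (fun s g => fun x => g (x + s) - g x) f = 0 := by
    intro hf c hc
    have := foldr_zero p k c m (le_of_lt hm) f hf
    rw [hc, Nat.sub_self, hS0, Submodule.span_empty, Submodule.mem_bot] at this
    exact this
  have h32 : (∀ c : List (ZMod (p ^ k)), c.length = m →
        c.foldr (fun s g => fun x => g (x + s) - g x) f = 0) →
      (fun g : ZMod (p ^ k) → ZMod p => fun x => g (x + 1) - g x)^[m] f = 0 := by
    intro h3
    rw [← foldr_replicate p k m f]
    exact h3 (List.replicate m 1) List.length_replicate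
  have h21 : (fun g : ZMod (p ^ k) → ZMod p => fun x => g (x + 1) - g x)^[m] f = 0 →
      f ∈ Submodule.span (ZMod p) (S p k m) :=
    D_mem_span p k hk m (le_of_lt hm) f
  exact ⟨⟨fun h1 => h32 (h13 h1), h21⟩, ⟨h13, fun h3 => h21 (h32 h3)⟩⟩
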